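/- Let F be a field of characteristic not 2 and let M be the generic 3×3 matrix with entries x_{ij}, 1 ≤ i,j ≤ 3, over R = F[x_{ij}]. Then the prime ideal P generated by all entries of M except x_{11}, x_{12}, x_{13} (i.e., all entries in rows 2 and 3) contains P_2(M), and P is a minimal prime over P_2(M). -/
import Mathlib

open MvPolynomial

/-- The evaluation killing all variables outside row 0. -/
noncomputable def rowPhi (F : Type*) [Field F] :
    MvPolynomial (Fin 3 × Fin 3) F →ₐ[F] MvPolynomial (Fin 3) F :=
  aeval (fun p : Fin 3 × Fin 3 => if p.1 = 0 then X p.2 else 0)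

lemma rowPhi_X {F : Type*} [Field F] (p : Fin 3 × Fin 3) :
    rowPhi F (X p) = if p.1 = 0 then X p.2 else 0 := by
  simp [rowPhi]

lemma rowSpan_key {F : Type*} [Field F] (f : MvPolynomial (Fin 3 × Fin 3) F) :
    f - rename (fun j : Fin 3 => ((0 : Fin 3), j)) (rowPhi F f) ∈
      Ideal.span {f : MvPolynomial (Fin 3 × Fin 3) F |
        ∃ i j : Fin 3, i ≠ 0 ∧ f = X (i, j)} := by
  induction f using MvPolynomial.induction_on with
  | C a => simp
  | add p q hp hq =>
      have := Ideal.add_mem _ hp hq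
      convert this using 1
      simp [map_add]
      ring
  | mul_X p n hp =>
      rcases eq_or_ne n.1 0 with h0 | h0
      · have hx : X (R := F) n = X ((0 : Fin 3), n.2) := by
          rw [show ((0 : Fin 3), n.2) = n by ext <;> simp [h0]]
        have : p * X n - rename (fun j : Fin 3 => ((0 : Fin 3), j)) (rowPhi F (p * X n))
            = (p - rename (fun j : Fin 3 => ((0 : Fin 3), j)) (rowPhi F p)) * X n := by
          rw [map_mul, rowPhi_X, if_pos h0, map_mul, rename_X]
          rw [hx]; ring
        rw [this]
        exact Ideal.mul_mem_right _ _ hp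
      · have : p * X n - rename (fun j : Fin 3 => ((0 : Fin 3), j)) (rowPhi F (p * X n))
            = p * X n := by
          rw [map_mul, rowPhi_X, if_neg h0]
          simp
        rw [this]
        exact Ideal.mul_mem_left _ _
          (Ideal.subset_span ⟨n.1, n.2, h0, by simp⟩)

lemma rowSpan_eq_ker (F : Type*) [Field F] :
    Ideal.span {f : MvPolynomial (Fin 3 × Fin 3) F |
        ∃ i j : Fin 3, i ≠ 0 ∧ f = X (i, j)} = RingHom.ker (rowPhi F) := by
  apply le_antisymm
  · rw [Ideal.span_le]
    rintro f ⟨i, j, hi, rfl⟩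
    simp [RingHom.mem_ker, rowPhi_X, hi]
  · intro f hf
    have h := rowSpan_key (F := F) f
    rw [RingHom.mem_ker] at hf
    rwa [hf, map_zero, sub_zero] at h

theorem row_prime_minimal_over_permanental (F : Type*) [Field F] (h2 : (2 : F) ≠ 0) :
    Ideal.span {f : MvPolynomial (Fin 3 × Fin 3) F |
        ∃ i k j l : Fin 3, i < k ∧ j < l ∧
          f = X (i, j) * X (k, l) + X (k, j) * X (i, l)} ≤
      Ideal.span {f : MvPolynomial (Fin 3 × Fin 3) F |
        ∃ i j : Fin 3, i ≠ 0 ∧ f = X (i, j)} ∧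
    Ideal.span {f : MvPolynomial (Fin 3 × Fin 3) F |
        ∃ i j : Fin 3, i ≠ 0 ∧ f = X (i, j)} ∈
      (Ideal.span {f : MvPolynomial (Fin 3 × Fin 3) F |
        ∃ i k j l : Fin 3, i < k ∧ j < l ∧
          f = X (i, j) * X (k, l) + X (k, j) * X (i, l)}).minimalPrimes := by
  set P : Ideal (MvPolynomial (Fin 3 × Fin 3) F) :=
    Ideal.span {f | ∃ i j : Fin 3, i ≠ 0 ∧ f = X (i, j)} with hP
  set P2 : Ideal (MvPolynomial (Fin 3 × Fin 3) F) :=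
    Ideal.span {f | ∃ i k j l : Fin 3, i < k ∧ j < l ∧
      f = X (i, j) * X (k, l) + X (k, j) * X (i, l)} with hP2
  have hle : P2 ≤ P := by
    rw [hP2, Ideal.span_le]
    rintro f ⟨i, k, j, l, hik, hjl, rfl⟩
    have hk : k ≠ 0 := (lt_of_le_of_lt (Fin.zero_le i) hik).ne'
    exact Ideal.add_mem _
      (Ideal.mul_mem_left _ _ (Ideal.subset_span ⟨k, l, hk, rfl⟩))
      (Ideal.mul_mem_right _ _ (Ideal.subset_span ⟨k, j, hk, rfl⟩))
  have hprime : P.IsPrime := by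
    rw [hP, rowSpan_eq_ker]
    exact RingHom.ker_isPrime _
  refine ⟨hle, ⟨⟨hprime, hle⟩, ?_⟩⟩
  rintro Q ⟨hQprime, hQ2⟩ hQP
  -- show P ≤ Q
  -- facts: 2 ∉ Q, X(0,j) ∉ Q
  have h2Q : (2 : MvPolynomial (Fin 3 × Fin 3) F) ∉ Q := by
    intro hmem
    have hu : IsUnit (2 : MvPolynomial (Fin 3 × Fin 3) F) := by
      have : (2 : MvPolynomial (Fin 3 × Fin 3) F) = C 2 := by
        simp [map_ofNat]
      rw [this]
      exact (isUnit_iff_ne_zero.mpr h2).map (C : F →+* MvPolynomial (Fin 3 × Fin 3) F)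
    exact hQprime.ne_top (Q.eq_top_of_isUnit_mem hmem hu)
  have hX0 : ∀ j : Fin 3, X ((0 : Fin 3), j) ∉ Q := by
    intro j hmem
    have := hQP hmem
    rw [hP, rowSpan_eq_ker, RingHom.mem_ker, rowPhi_X] at this
    simp at this
  -- generators of P2 for any i ≠ k, j ≠ l
  have hgen : ∀ i k j l : Fin 3, i < k → j ≠ l →
      X (i, j) * X (k, l) + X (k, j) * X (i, l) ∈ Q := by
    intro i k j l hik hjl
    rcases hjl.lt_or_gt with h | h
    · exact hQ2 (Ideal.subset_span ⟨i, k, j, l, hik, h, rfl⟩)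
    · have := hQ2 (Ideal.subset_span ⟨i, k, l, j, hik, h, rfl⟩)
      convert this using 1
      ring
  -- every X(k,c) with k ≠ 0 is in Q
  have hvar : ∀ k c : Fin 3, k ≠ 0 → X (k, c) ∈ Q := by
    intro k c hk
    set a : Fin 3 := c + 1 with ha
    set b : Fin 3 := c + 2 with hb
    have hdist : c ≠ b ∧ c ≠ a ∧ a ≠ b := by
      constructor
      · rw [hb]; fin_cases c <;> decide
      constructor
      · rw [ha]; fin_cases c <;> decide
      · rw [ha, hb]; fin_cases c <;> decide
    have h0k : (0 : Fin 3) < k := Fin.pos_of_ne_zero hk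
    have e1 := hgen 0 k c b h0k hdist.1
    have e2 := hgen 0 k c a h0k hdist.2.1
    have e3 := hgen 0 k a b h0k hdist.2.2
    have hcomb : (2 : MvPolynomial (Fin 3 × Fin 3) F) * (X ((0:Fin 3), a) * (X ((0:Fin 3), b) * X (k, c))) =
        X ((0:Fin 3), a) * (X ((0:Fin 3), c) * X (k, b) + X (k, c) * X ((0:Fin 3), b))
        + X ((0:Fin 3), b) * (X ((0:Fin 3), c) * X (k, a) + X (k, c) * X ((0:Fin 3), a))
        - X ((0:Fin 3), c) * (X ((0:Fin 3), a) * X (k, b) + X (k, a) * X ((0:Fin 3), b)) := by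
      ring
    have hmem : (2 : MvPolynomial (Fin 3 × Fin 3) F) * (X ((0:Fin 3), a) * (X ((0:Fin 3), b) * X (k, c))) ∈ Q := by
      rw [hcomb]
      exact Ideal.sub_mem _ (Ideal.add_mem _ (Ideal.mul_mem_left _ _ e1)
        (Ideal.mul_mem_left _ _ e2)) (Ideal.mul_mem_left _ _ e3)
    rcases hQprime.mem_or_mem hmem with h | h
    · exact absurd h h2Q
    rcases hQprime.mem_or_mem h with h | h
    · exact absurd h (hX0 a)
    rcases hQprime.mem_or_mem h with h | h
    · exact absurd h (hX0 b)
    · exact h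
  rw [hP, Ideal.span_le]
  rintro f ⟨i, j, hi, rfl⟩
  exact hvar i j hi
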